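/- (Parameter differentiation of the matrix exponential, Wilcox/Tsai–Chan identity.) Let A and B be n×n real matrices and t ≥ 0 a real number. Then the map s ↦ exp(t·(A + s·B)) from ℝ to n×n real matrices is differentiable at every point s₀, with derivative equal to ∫_0^t exp((t−u)·(A + s₀·B)) · B · exp(u·(A + s₀·B)) du. -/

import Mathlib

set_option autoImplicit false
set_option maxHeartbeats 1000000

open Matrix

attribute [local instance] Matrix.normedAddCommGroup Matrix.normedSpace

/-- The matrix exponential of a real square matrix. -/
noncomputable def mexp {n : Type*} [Fintype n] [DecidableEq n] (A : Matrix n n ℝ) :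
    Matrix n n ℝ :=
  NormedSpace.exp A

section key
open NormedSpace intervalIntegral
attribute [-instance] Matrix.normedSpace Matrix.normedAddCommGroup
attribute [local instance] Matrix.linftyOpNormedRing Matrix.linftyOpNormedAlgebra

variable {n : ℕ}

lemma exp_param_cont (A B : Matrix (Fin n) (Fin n) ℝ) (t s₀ : ℝ) :
    Continuous fun u : ℝ =>
      exp ((t - u) • (A + s₀ • B)) * B * exp (u • (A + s₀ • B)) :=
  ((exp_continuous.comp ((continuous_const.sub continuous_id).smul
      continuous_const)).mul continuous_const).mul
    (exp_continuous.comp (continuous_id.smul continuous_const))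

lemma exp_param_entry_int (F : ℝ → Matrix (Fin n) (Fin n) ℝ) (hF : Continuous F) (a b : ℝ)
    (i j : Fin n) : (∫ u in a..b, F u) i j = ∫ u in a..b, F u i j := by
  have := ((Matrix.entryLinearMap ℝ ℝ i j).toContinuousLinearMap).intervalIntegral_comp_comm
    (hF.intervalIntegrable (μ := MeasureTheory.volume) a b)
  exact this.symm

lemma exp_param_key (A B : Matrix (Fin n) (Fin n) ℝ) (t : ℝ) (s₀ : ℝ)
    (D : Matrix (Fin n) (Fin n) ℝ)
    (hD : ∀ i j, D i j = ∫ u in (0:ℝ)..t,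
      (exp ((t - u) • (A + s₀ • B)) * B * exp (u • (A + s₀ • B))) i j) :
    Filter.Tendsto (slope (fun s : ℝ => exp (t • (A + s • B))) s₀) (nhdsWithin s₀ {s₀}ᶜ)
      (nhds D) := by
  have hD' : D = ∫ u in (0:ℝ)..t,
      exp ((t - u) • (A + s₀ • B)) * B * exp (u • (A + s₀ • B)) := by
    ext i j
    rw [hD i j, exp_param_entry_int _ (exp_param_cont A B t s₀)]
  rw [hD']
  set C := A + s₀ • B with hC
  -- Duhamel / Wilcox identity
  have duhamel : ∀ s : ℝ, exp (t • (A + s • B)) - exp (t • C)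
      = (s - s₀) • ∫ u in (0:ℝ)..t, exp ((t - u) • C) * B * exp (u • (A + s • B)) := by
    intro s
    set M := A + s • B with hM
    have hMC : M - C = (s - s₀) • B := by
      rw [hM, hC]; module
    have hcomm : ∀ r : ℝ, C * exp (r • C) = exp (r • C) * C := fun r =>
      ((Commute.refl C).smul_right r).exp_right |>.eq
    have h1 : ∀ u : ℝ, HasDerivAt (fun u : ℝ => exp ((t - u) • C) * exp (u • M))
        ((s - s₀) • (exp ((t - u) • C) * B * exp (u • M))) u := by
      intro u
      have hsub : HasDerivAt (fun u : ℝ => t - u) (-1) u :=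
        (hasDerivAt_id u).const_sub t |>.congr_deriv rfl
      have hL : HasDerivAt (fun u : ℝ => exp ((t - u) • C))
          ((-1 : ℝ) • (C * exp ((t - u) • C))) u :=
        (hasDerivAt_exp_smul_const' (𝕂 := ℝ) C (t - u)).scomp u hsub
      have hR : HasDerivAt (fun u : ℝ => exp (u • M)) (M * exp (u • M)) u :=
        hasDerivAt_exp_smul_const' (𝕂 := ℝ) M u
      have := hL.mul hR
      refine this.congr_deriv ?_
      rw [neg_one_smul, hcomm]
      have h2 : (s - s₀) • (exp ((t - u) • C) * B * exp (u • M))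
          = exp ((t - u) • C) * (M - C) * exp (u • M) := by
        rw [hMC]; simp only [smul_mul_assoc, mul_smul_comm]
      rw [h2]; noncomm_ring
    have hcont : Continuous fun u : ℝ =>
        (s - s₀) • (exp ((t - u) • C) * B * exp (u • M)) := by
      refine Continuous.const_smul (g := fun u : ℝ => exp ((t - u) • C) * B * exp (u • M)) ?_ (s - s₀)
      exact (((exp_continuous).comp ((continuous_const.sub continuous_id).smul
          continuous_const)).mul continuous_const).mul
        ((exp_continuous).comp (continuous_id.smul continuous_const))
    have ftc := intervalIntegral.integral_eq_sub_of_hasDerivAt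
      (fun u _ => h1 u) (hcont.intervalIntegrable 0 t)
    rw [intervalIntegral.integral_smul] at ftc
    rw [ftc]
    simp
  -- continuity of the parametric integral
  have hI : Continuous (fun s : ℝ =>
      ∫ u in (0:ℝ)..t, exp ((t - u) • C) * B * exp (u • (A + s • B))) := by
    apply continuous_parametric_intervalIntegral_of_continuous' (μ := MeasureTheory.volume)
    · apply Continuous.mul
      · apply Continuous.mul
        · exact exp_continuous.comp ((continuous_const.sub continuous_snd).smul continuous_const)
        · exact continuous_const
      · exact exp_continuous.comp (continuous_snd.smul
          (continuous_const.add (continuous_fst.smul continuous_const)))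
  refine ((hI.tendsto s₀).mono_left nhdsWithin_le_nhds).congr' ?_
  filter_upwards [self_mem_nhdsWithin] with s hs
  have hs' : s - s₀ ≠ 0 := sub_ne_zero.2 hs
  rw [slope_def_module, duhamel s, smul_smul, inv_mul_cancel₀ hs', one_smul]

end key

section main
variable {n : ℕ}

lemma exp_param_entry_int' (F : ℝ → Matrix (Fin n) (Fin n) ℝ) (hF : Continuous F) (a b : ℝ)
    (i j : Fin n) : (∫ u in a..b, F u) i j = ∫ u in a..b, F u i j := by
  have := ((Matrix.entryLinearMap ℝ ℝ i j).toContinuousLinearMap).intervalIntegral_comp_comm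
    (hF.intervalIntegrable (μ := MeasureTheory.volume) a b)
  exact this.symm

end main

/-- Wilcox/Tsai–Chan identity: the map `s ↦ exp (t • (A + s • B))` is differentiable at
every `s₀`, with derivative `∫_0^t exp((t-u) • (A + s₀ • B)) * B * exp(u • (A + s₀ • B)) du`. -/
theorem hasDerivAt_exp_param {n : ℕ} (A B : Matrix (Fin n) (Fin n) ℝ) (t : ℝ) (ht : 0 ≤ t)
    (s₀ : ℝ) :
    HasDerivAt (fun s : ℝ => mexp (t • (A + s • B)))
      (∫ u in (0:ℝ)..t, mexp ((t - u) • (A + s₀ • B)) * B * mexp (u • (A + s₀ • B))) s₀ := by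
  refine hasDerivAt_iff_tendsto_slope.2 ?_
  simp only [mexp]
  refine exp_param_key A B t s₀ _ fun i j => ?_
  exact exp_param_entry_int' _ (exp_param_cont A B t s₀) 0 t i j
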